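/- Let $m, n \in \mathbb{N}$ with $n \geq 2$ and let $k$ be a field. The Lie algebra $L_k = \mathcal{L}_{m,n} \otimes_{\mathbb{Z}} k$ is indecomposable: it admits no direct sum decomposition $L_k = L_1 \oplus L_2$ into two nonzero Lie ideals. -/

import Mathlib

open Sum

variable {m n : ℕ}

/-- The index type `𝐄`. -/
abbrev S9E (m n : ℕ) := {e : Fin n → ℕ // ∑ i, e i = m - 1}
/-- The index type `𝐅`. -/
abbrev S9F (m n : ℕ) := {f : Fin n → ℕ // ∑ i, f i = m}

instance S9F.fintype (m n : ℕ) : Fintype {f : Fin n → ℕ // ∑ i, f i = m} :=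
  Fintype.subtype (Finset.Nat.antidiagonalTuple n m) fun _ =>
    Finset.Nat.mem_antidiagonalTuple

lemma s9_sum_ite (i : Fin n) : (∑ j : Fin n, if j = i then 1 else 0) = 1 := by
  simp [Finset.sum_ite_eq']

/-- `e + 𝐛ᵢ`. -/
def s9fAdd (hm : 1 ≤ m) (e : S9E m n) (i : Fin n) : S9F m n :=
  ⟨fun j => e.val j + if j = i then 1 else 0, by
    rw [Finset.sum_add_distrib, e.prop, s9_sum_ite]; omega⟩

/-- `f - 𝐛ᵢ` when `f i ≥ 1`. -/
def s9sub (f : S9F m n) (i : Fin n) (h : 1 ≤ f.val i) : S9E m n :=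
  ⟨fun j => f.val j - if j = i then 1 else 0, by
    show (∑ j : Fin n, (f.val j - if j = i then 1 else 0)) = m - 1
    have h1 : ∑ j : Fin n, ((f.val j - if j = i then 1 else 0) + if j = i then 1 else 0)
        = ∑ j : Fin n, f.val j := by
      refine Finset.sum_congr rfl fun j _ => ?_
      by_cases hj : j = i <;> simp [hj] <;> omega
    rw [Finset.sum_add_distrib, s9_sum_ite, f.prop] at h1
    omega⟩

lemma s9fAdd_sub (hm : 1 ≤ m) (f : S9F m n) (i : Fin n) (h : 1 ≤ f.val i) :
    s9fAdd hm (s9sub f i h) i = f := by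
  apply Subtype.ext; funext j
  show (f.val j - if j = i then 1 else 0) + (if j = i then 1 else 0) = f.val j
  by_cases hj : j = i <;> simp [hj] <;> omega

lemma s9sub_fAdd (hm : 1 ≤ m) (e : S9E m n) (i : Fin n) (h : 1 ≤ (s9fAdd hm e i).val i) :
    s9sub (s9fAdd hm e i) i h = e := by
  apply Subtype.ext; funext j
  show (e.val j + if j = i then 1 else 0) - (if j = i then 1 else 0) = e.val j
  omega

/-- Weight encoding lexicographic order. -/
def s9W (m : ℕ) (e : S9E m n) : ℕ := ∑ j : Fin n, e.val j * (m + 2) ^ (n - 1 - j.val)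

lemma s9comb (hm : 1 ≤ m) {k : Type*} [Field k] (a : S9E m n → k) (e₀ : S9E m n)
    (ha : a e₀ ≠ 0) (c : Fin n → k) (hc : c ≠ 0) :
    ∃ f : S9F m n,
      (∑ i : Fin n, (if h : 1 ≤ f.val i then a (s9sub f i h) else 0) * c i) ≠ 0 := by
  classical
  -- maximal weight element of the support of `a`
  obtain ⟨e, heS, hemax⟩ := Finset.exists_max_image
    (Finset.univ.filter fun e : S9E m n => a e ≠ 0) (s9W m) ⟨e₀, by simp [ha]⟩
  have hae : a e ≠ 0 := (Finset.mem_filter.mp heS).2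
  -- minimal index with nonzero `c`
  obtain ⟨i₀, hiS, himin⟩ := Finset.exists_min_image
    (Finset.univ.filter fun i => c i ≠ 0) id
    (by
      obtain ⟨i, hi⟩ := Function.ne_iff.mp hc
      exact ⟨i, Finset.mem_filter.mpr ⟨Finset.mem_univ i, by simpa using hi⟩⟩)
  have hci₀ : c i₀ ≠ 0 := (Finset.mem_filter.mp hiS).2
  refine ⟨s9fAdd hm e i₀, ?_⟩
  have hone : 1 ≤ (s9fAdd hm e i₀).val i₀ := by simp [s9fAdd]
  rw [Finset.sum_eq_single i₀]
  · rw [dif_pos hone, s9sub_fAdd]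
    exact mul_ne_zero hae hci₀
  · intro i _ hii
    by_cases hc0 : c i = 0
    · rw [hc0, mul_zero]
    · have hile : i₀ ≤ i := himin i (by simp [hc0])
      have hi₀i : i₀ < i := lt_of_le_of_ne hile (fun h => hii h.symm)
      have hii' : i ≠ i₀ := hii
      by_cases h1 : 1 ≤ (s9fAdd hm e i₀).val i
      · rw [dif_pos h1]
        set e' := s9sub (s9fAdd hm e i₀) i h1 with he'
        have hei : 1 ≤ e.val i := by
          have : (s9fAdd hm e i₀).val i = e.val i := by simp [s9fAdd, hii']
          omega
        have hptw : ∀ j, e'.val j + (if j = i then 1 else 0)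
            = e.val j + (if j = i₀ then 1 else 0) := by
          intro j
          show ((e.val j + if j = i₀ then 1 else 0) - if j = i then 1 else 0)
              + (if j = i then 1 else 0) = _
          by_cases hj : j = i
          · subst hj
            rw [if_neg hii', if_pos rfl]
            omega
          · rw [if_neg hj]
            omega
        have hWs : s9W m e' + (m + 2) ^ (n - 1 - i.val)
            = s9W m e + (m + 2) ^ (n - 1 - i₀.val) := by
          have hsum : ∑ j : Fin n, (e'.val j + if j = i then 1 else 0) * (m + 2) ^ (n - 1 - j.val)
              = ∑ j : Fin n, (e.val j + if j = i₀ then 1 else 0) * (m + 2) ^ (n - 1 - j.val) := by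
            refine Finset.sum_congr rfl fun j _ => by rw [hptw j]
          simp only [add_mul, Finset.sum_add_distrib, ite_mul, one_mul, zero_mul,
            Finset.sum_ite_eq', Finset.mem_univ, if_pos] at hsum
          simpa [s9W] using hsum
        have hWlt : s9W m e < s9W m e' := by
          have hpow : (m + 2) ^ (n - 1 - i.val) < (m + 2) ^ (n - 1 - i₀.val) := by
            apply Nat.pow_lt_pow_right (by omega)
            have := i.isLt
            have := i₀.isLt
            omega
          omega
        have : a e' = 0 := by
          by_contra hne
          exact absurd (hemax _ (by simp [hne])) (not_le_of_gt hWlt)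
        rw [this, zero_mul]
      · rw [dif_neg h1, zero_mul]
  · simp

section LieStuff

variable {k : Type*} [Field k] {L : Type*} [LieRing L] [LieAlgebra k L]
variable (hm : 1 ≤ m)
variable (b : Module.Basis (S9E m n ⊕ S9F m n ⊕ Fin n) k L)

lemma s9bracketY
    (hbr : ∀ (e : S9E m n) (f : S9F m n) (i : Fin n),
        (∀ j, f.val j = e.val j + if j = i then 1 else 0) →
        ⁅b (Sum.inl e), b (Sum.inr (Sum.inl f))⁆ = b (Sum.inr (Sum.inr i)))
    (hbr0 : ∀ (e : S9E m n) (f : S9F m n),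
        (¬ ∃ i : Fin n, ∀ j, f.val j = e.val j + if j = i then 1 else 0) →
        ⁅b (Sum.inl e), b (Sum.inr (Sum.inl f))⁆ = 0)
    (hyy : ∀ f f', ⁅b (Sum.inr (Sum.inl f)), b (Sum.inr (Sum.inl f'))⁆ = 0)
    (hz : ∀ u (i : Fin n), ⁅b u, b (Sum.inr (Sum.inr i))⁆ = 0)
    (v : L) (f : S9F m n) :
    ⁅v, b (Sum.inr (Sum.inl f))⁆ =
      ∑ i : Fin n, (if h : 1 ≤ f.val i then b.repr v (Sum.inl (s9sub f i h)) else 0) •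
        b (Sum.inr (Sum.inr i)) := by
  have key : (LieAlgebra.ad k L (b (Sum.inr (Sum.inl f)))) =
      -∑ i : Fin n, (if h : 1 ≤ f.val i then
        LinearMap.smulRight (b.coord (Sum.inl (s9sub f i h))) (b (Sum.inr (Sum.inr i)))
        else 0) := by
    apply b.ext
    intro u
    rw [LieAlgebra.ad_apply, LinearMap.neg_apply, ← lie_skew, neg_inj, LinearMap.sum_apply]
    have coordeval : ∀ (u' : S9E m n ⊕ S9F m n ⊕ Fin n) i (h : 1 ≤ f.val i),
        ((if h : 1 ≤ f.val i then
          LinearMap.smulRight (b.coord (Sum.inl (s9sub f i h))) (b (Sum.inr (Sum.inr i)))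
          else 0) (b u') : L) =
        (if u' = Sum.inl (s9sub f i h) then b (Sum.inr (Sum.inr i)) else 0) := by
      intro u' i h
      rw [dif_pos h]
      simp [Module.Basis.coord_apply, Module.Basis.repr_self, Finsupp.single_apply, ite_smul]
    match u with
    | Sum.inl e =>
      by_cases hex : ∃ i : Fin n, ∀ j, f.val j = e.val j + if j = i then 1 else 0
      · obtain ⟨i, hi⟩ := hex
        rw [hbr e f i hi]
        rw [Finset.sum_eq_single i]
        · have h1 : 1 ≤ f.val i := by rw [hi i]; simp
          have hsub : s9sub f i h1 = e := by
            apply Subtype.ext; funext j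
            show f.val j - (if j = i then 1 else 0) = e.val j
            rw [hi j]; omega
          rw [coordeval _ i h1, hsub, if_pos rfl]
        · intro i' _ hi'
          by_cases h1 : 1 ≤ f.val i'
          · rw [coordeval _ i' h1, if_neg]
            intro hcon
            have := congrFun (congrArg Subtype.val (Sum.inl.inj hcon)) i
            simp only [s9sub] at this
            rw [hi i, if_neg (Ne.symm hi'), if_pos rfl] at this
            omega
          · rw [dif_neg h1, LinearMap.zero_apply]
        · simp
      · rw [hbr0 e f hex]
        refine (Finset.sum_eq_zero fun i _ => ?_).symm
        by_cases h1 : 1 ≤ f.val i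
        · rw [coordeval _ i h1, if_neg]
          intro hcon
          apply hex
          refine ⟨i, fun j => ?_⟩
          have := congrFun (congrArg Subtype.val (Sum.inl.inj hcon)) j
          simp only [s9sub] at this
          by_cases hj : j = i
          · subst hj; rw [if_pos rfl] at this ⊢; omega
          · rw [if_neg hj] at this ⊢; omega
        · rw [dif_neg h1, LinearMap.zero_apply]
    | Sum.inr (Sum.inl f') =>
      rw [hyy f' f]
      refine (Finset.sum_eq_zero fun i _ => ?_).symm
      by_cases h1 : 1 ≤ f.val i
      · rw [coordeval _ i h1, if_neg (by simp)]
      · rw [dif_neg h1, LinearMap.zero_apply]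
    | Sum.inr (Sum.inr i') =>
      rw [← lie_skew, hz _ i', neg_zero]
      refine (Finset.sum_eq_zero fun i _ => ?_).symm
      by_cases h1 : 1 ≤ f.val i
      · rw [coordeval _ i h1, if_neg (by simp)]
      · rw [dif_neg h1, LinearMap.zero_apply]
  have hv := congrFun (congrArg DFunLike.coe key) v
  rw [LieAlgebra.ad_apply, LinearMap.neg_apply] at hv
  rw [← lie_skew, hv, neg_neg, LinearMap.sum_apply]
  refine Finset.sum_congr rfl fun i _ => ?_
  by_cases h1 : 1 ≤ f.val i
  · rw [dif_pos h1, dif_pos h1, LinearMap.smulRight_apply, Module.Basis.coord_apply]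
  · rw [dif_neg h1, dif_neg h1, LinearMap.zero_apply, zero_smul]

lemma s9bracketX
    (hbr : ∀ (e : S9E m n) (f : S9F m n) (i : Fin n),
        (∀ j, f.val j = e.val j + if j = i then 1 else 0) →
        ⁅b (Sum.inl e), b (Sum.inr (Sum.inl f))⁆ = b (Sum.inr (Sum.inr i)))
    (hbr0 : ∀ (e : S9E m n) (f : S9F m n),
        (¬ ∃ i : Fin n, ∀ j, f.val j = e.val j + if j = i then 1 else 0) →
        ⁅b (Sum.inl e), b (Sum.inr (Sum.inl f))⁆ = 0)
    (hxx : ∀ e e', ⁅b (Sum.inl e), b (Sum.inl e')⁆ = 0)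
    (hz : ∀ u (i : Fin n), ⁅b u, b (Sum.inr (Sum.inr i))⁆ = 0)
    (w : L) (e : S9E m n) :
    ⁅b (Sum.inl e), w⁆ =
      ∑ i : Fin n, (b.repr w (Sum.inr (Sum.inl (s9fAdd hm e i)))) • b (Sum.inr (Sum.inr i)) := by
  have key : (LieAlgebra.ad k L (b (Sum.inl e))) =
      ∑ i : Fin n,
        LinearMap.smulRight (b.coord (Sum.inr (Sum.inl (s9fAdd hm e i)))) (b (Sum.inr (Sum.inr i))) := by
    apply b.ext
    intro u
    rw [LieAlgebra.ad_apply, LinearMap.sum_apply]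
    have coordeval : ∀ (u' : S9E m n ⊕ S9F m n ⊕ Fin n) (i : Fin n),
        ((LinearMap.smulRight (b.coord (Sum.inr (Sum.inl (s9fAdd hm e i))))
            (b (Sum.inr (Sum.inr i)))) (b u') : L) =
        (if u' = Sum.inr (Sum.inl (s9fAdd hm e i)) then b (Sum.inr (Sum.inr i)) else 0) := by
      intro u' i
      simp [Module.Basis.coord_apply, Module.Basis.repr_self, Finsupp.single_apply, ite_smul]
    match u with
    | Sum.inl e' =>
      rw [hxx e e']
      refine (Finset.sum_eq_zero fun i _ => ?_).symm
      rw [coordeval _ i, if_neg (by simp)]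
    | Sum.inr (Sum.inl f) =>
      by_cases hex : ∃ i : Fin n, ∀ j, f.val j = e.val j + if j = i then 1 else 0
      · obtain ⟨i, hi⟩ := hex
        rw [hbr e f i hi, Finset.sum_eq_single i]
        · have hf : f = s9fAdd hm e i := Subtype.ext (funext fun j => hi j)
          rw [coordeval _ i, if_pos (by rw [hf])]
        · intro i' _ hi'
          rw [coordeval _ i', if_neg]
          intro hcon
          have hF : f = s9fAdd hm e i' := Sum.inl.inj (Sum.inr.inj hcon)
          have hval : f.val i' = e.val i' + 1 := by rw [hF]; simp [s9fAdd]
          have h2 := hi i'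
          rw [if_neg hi'] at h2
          omega
        · simp
      · rw [hbr0 e f hex]
        refine (Finset.sum_eq_zero fun i _ => ?_).symm
        rw [coordeval _ i, if_neg]
        intro hcon
        apply hex
        refine ⟨i, fun j => ?_⟩
        exact congrFun (congrArg Subtype.val (Sum.inl.inj (Sum.inr.inj hcon))) j
    | Sum.inr (Sum.inr i') =>
      rw [hz _ i']
      refine (Finset.sum_eq_zero fun i _ => ?_).symm
      rw [coordeval _ i, if_neg (by simp)]
  have hv := congrFun (congrArg DFunLike.coe key) w
  rw [LieAlgebra.ad_apply] at hv
  rw [hv, LinearMap.sum_apply]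
  refine Finset.sum_congr rfl fun i _ => ?_
  rw [LinearMap.smulRight_apply, Module.Basis.coord_apply]

include hm in
lemma s9zmem
    (hbr : ∀ (e : S9E m n) (f : S9F m n) (i : Fin n),
        (∀ j, f.val j = e.val j + if j = i then 1 else 0) →
        ⁅b (Sum.inl e), b (Sum.inr (Sum.inl f))⁆ = b (Sum.inr (Sum.inr i)))
    (hbr0 : ∀ (e : S9E m n) (f : S9F m n),
        (¬ ∃ i : Fin n, ∀ j, f.val j = e.val j + if j = i then 1 else 0) →
        ⁅b (Sum.inl e), b (Sum.inr (Sum.inl f))⁆ = 0)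
    (hyy : ∀ f f', ⁅b (Sum.inr (Sum.inl f)), b (Sum.inr (Sum.inl f'))⁆ = 0)
    (hz : ∀ u (i : Fin n), ⁅b u, b (Sum.inr (Sum.inr i))⁆ = 0)
    (M : LieIdeal k L) (v : L) (hv : v ∈ M) (e₀ : S9E m n)
    (ha : b.repr v (Sum.inl e₀) ≠ 0) (j : Fin n) :
    b (Sum.inr (Sum.inr j)) ∈ M := by
  classical
  set A : Matrix (S9F m n) (Fin n) k :=
    fun f i => if h : 1 ≤ f.val i then b.repr v (Sum.inl (s9sub f i h)) else 0 with hA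
  have hw : ∀ f : S9F m n,
      ⁅v, b (Sum.inr (Sum.inl f))⁆ = ∑ i : Fin n, A f i • b (Sum.inr (Sum.inr i)) :=
    fun f => s9bracketY b hbr hbr0 hyy hz v f
  have hwM : ∀ f : S9F m n, (∑ i : Fin n, A f i • b (Sum.inr (Sum.inr i))) ∈ M := by
    intro f
    rw [← hw f, ← lie_skew]
    exact neg_mem (M.lie_mem hv)
  have hker : ∀ c : Fin n → k, A.mulVecLin c = 0 → c = 0 := by
    intro c hc
    by_contra hcne
    obtain ⟨f, hf⟩ := s9comb hm (fun e => b.repr v (Sum.inl e)) e₀ ha c hcne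
    apply hf
    have h0 : (Matrix.mulVec A c) f = 0 := congrFun hc f
    simpa [Matrix.mulVecLin_apply, Matrix.mulVec, dotProduct, hA] using h0
  have hinj : Function.Injective A.mulVecLin :=
    LinearMap.ker_eq_bot.mp (LinearMap.ker_eq_bot'.mpr hker)
  have hrank : A.rank = n := by
    rw [Matrix.rank, LinearMap.finrank_range_of_inj hinj, Module.finrank_pi, Fintype.card_fin]
  have hspan : Submodule.span k (Set.range A) = ⊤ := by
    have h1 : A.transpose.rank = n := by rw [Matrix.rank_transpose]; exact hrank
    have h2 : LinearMap.range A.transpose.mulVecLin = Submodule.span k (Set.range A) := by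
      rw [Matrix.range_mulVecLin]; rfl
    apply Submodule.eq_top_of_finrank_eq
    rw [← h2]
    have h4 : Module.finrank k (Fin n → k) = n := by simp
    rw [h4]
    exact h1
  have hmem : (Pi.single j 1 : Fin n → k) ∈ Submodule.span k (Set.range A) := by
    rw [hspan]; exact Submodule.mem_top
  obtain ⟨c, hc⟩ := (Submodule.mem_span_range_iff_exists_fun k).mp hmem
  have hcoef : ∀ i, (∑ f : S9F m n, c f * A f i) = (Pi.single j 1 : Fin n → k) i := by
    intro i
    have := congrFun hc i
    simpa [Finset.sum_apply] using this
  have hzeq : b (Sum.inr (Sum.inr j)) =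
      ∑ f : S9F m n, c f • (∑ i : Fin n, A f i • b (Sum.inr (Sum.inr i))) := by
    simp only [Finset.smul_sum, smul_smul]
    rw [Finset.sum_comm]
    have : ∀ i : Fin n, (∑ f : S9F m n, (c f * A f i) • b (Sum.inr (Sum.inr i)))
        = (Pi.single j 1 : Fin n → k) i • b (Sum.inr (Sum.inr i)) := by
      intro i
      rw [← Finset.sum_smul, hcoef i]
    rw [Finset.sum_congr rfl fun i _ => this i]
    rw [Finset.sum_eq_single j]
    · rw [Pi.single_eq_same, one_smul]
    · intro i _ hij
      rw [Pi.single_eq_of_ne hij, zero_smul]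
    · simp
  rw [hzeq]
  exact sum_mem fun f _ => M.smul_mem (c f) (hwM f)

include hm in
lemma s9key (hn0 : 0 < n)
    (hbr : ∀ (e : S9E m n) (f : S9F m n) (i : Fin n),
        (∀ j, f.val j = e.val j + if j = i then 1 else 0) →
        ⁅b (Sum.inl e), b (Sum.inr (Sum.inl f))⁆ = b (Sum.inr (Sum.inr i)))
    (hbr0 : ∀ (e : S9E m n) (f : S9F m n),
        (¬ ∃ i : Fin n, ∀ j, f.val j = e.val j + if j = i then 1 else 0) →
        ⁅b (Sum.inl e), b (Sum.inr (Sum.inl f))⁆ = 0)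
    (hxx : ∀ e e', ⁅b (Sum.inl e), b (Sum.inl e')⁆ = 0)
    (hyy : ∀ f f', ⁅b (Sum.inr (Sum.inl f)), b (Sum.inr (Sum.inl f'))⁆ = 0)
    (hz : ∀ u (i : Fin n), ⁅b u, b (Sum.inr (Sum.inr i))⁆ = 0)
    (M N : LieIdeal k L) (hc : IsCompl M N)
    (hN : ∀ v ∈ N, ∀ e : S9E m n, b.repr v (Sum.inl e) = 0) :
    N = ⊥ := by
  classical
  have hMN : ∀ x, x ∈ M → x ∈ N → x = 0 := by
    intro x hxM hxN
    have h := disjoint_iff.mp hc.disjoint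
    have hx2 : x ∈ M ⊓ N := (LieSubmodule.mem_inf M N x).mpr ⟨hxM, hxN⟩
    rw [h] at hx2
    exact (LieSubmodule.mem_bot _).mp hx2
  set i₀ : Fin n := ⟨0, hn0⟩ with hi₀
  set e₁ : S9E m n := ⟨fun j => if j = i₀ then m - 1 else 0, by simp [Finset.sum_ite_eq']⟩
    with he₁
  have hxsup : b (Sum.inl e₁) ∈ M ⊔ N := by
    rw [codisjoint_iff.mp hc.codisjoint]
    trivial
  obtain ⟨v₁, hv₁, v₂, hv₂, hadd⟩ := (LieSubmodule.mem_sup M N _).mp hxsup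
  have hrepr : b.repr v₁ (Sum.inl e₁) ≠ 0 := by
    have h1 : b.repr (v₁ + v₂) (Sum.inl e₁) = 1 := by
      rw [hadd, Module.Basis.repr_self, Finsupp.single_eq_same]
    rw [map_add, Finsupp.add_apply, hN v₂ hv₂ e₁, add_zero] at h1
    rw [h1]
    exact one_ne_zero
  have hzM : ∀ j : Fin n, b (Sum.inr (Sum.inr j)) ∈ M :=
    s9zmem hm b hbr hbr0 hyy hz M v₁ hv₁ e₁ hrepr
  have hNy : ∀ w ∈ N, ∀ f : S9F m n, b.repr w (Sum.inr (Sum.inl f)) = 0 := by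
    intro w hw f
    have hfi : ∃ i, 1 ≤ f.val i := by
      by_contra hcon
      push_neg at hcon
      have h0 : ∑ i : Fin n, f.val i = 0 :=
        Finset.sum_eq_zero fun i _ => by have := hcon i; omega
      rw [f.prop] at h0
      omega
    obtain ⟨i, hi⟩ := hfi
    set e := s9sub f i hi with he
    have hbx := s9bracketX hm b hbr hbr0 hxx hz w e
    have h1 : ⁅b (Sum.inl e), w⁆ ∈ N := N.lie_mem hw
    have h2 : ⁅b (Sum.inl e), w⁆ ∈ M := by
      rw [hbx]
      exact sum_mem fun i' _ => M.smul_mem _ (hzM i')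
    have h0 : ⁅b (Sum.inl e), w⁆ = 0 := hMN _ h2 h1
    rw [h0] at hbx
    have h4 : (b.repr (∑ i' : Fin n,
        (b.repr w (Sum.inr (Sum.inl (s9fAdd hm e i')))) • b (Sum.inr (Sum.inr i'))))
        (Sum.inr (Sum.inr i)) = 0 := by
      rw [← hbx]
      simp
    rw [map_sum] at h4
    simp only [map_smul, Module.Basis.repr_self, Finsupp.smul_apply, Finsupp.single_apply,
      Finset.sum_apply'] at h4
    rw [Finset.sum_eq_single i] at h4
    · rw [s9fAdd_sub hm f i hi] at h4
      simpa using h4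
    · intro i' _ hii'
      simp [hii']
    · simp
  refine le_bot_iff.mp ?_
  intro w hw
  rw [LieSubmodule.mem_bot]
  have hwM : w ∈ M := by
    rw [← b.linearCombination_repr w, Finsupp.linearCombination_apply, Finsupp.sum]
    refine sum_mem fun u hu => ?_
    match u with
    | Sum.inl e => exact absurd (hN w hw e) (Finsupp.mem_support_iff.mp hu)
    | Sum.inr (Sum.inl f) => exact absurd (hNy w hw f) (Finsupp.mem_support_iff.mp hu)
    | Sum.inr (Sum.inr j) => exact M.smul_mem _ (hzM j)
  exact hMN w hwM hw

end LieStuff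

/-- the Lie algebra `L_k = 𝓛_{m,n} ⊗ k` (basis
`{x_𝐞 : 𝐞 ∈ 𝐄} ∪ {y_𝐟 : 𝐟 ∈ 𝐅} ∪ {z₁,…,z_n}` with `[x_𝐞, y_𝐟] = z_i` when
`𝐟 - 𝐞 = 𝐛_i`, all other basis brackets zero, the `z_i` central) is
indecomposable: it admits no direct sum decomposition into two nonzero Lie
ideals. -/
theorem stmt9 (m n : ℕ) (hm : 1 ≤ m) (hn : 2 ≤ n) (k : Type*) [Field k]
    (L : Type*) [LieRing L] [LieAlgebra k L]
    (b : Module.Basis (({e : Fin n → ℕ // ∑ i, e i = m - 1}) ⊕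
        ({f : Fin n → ℕ // ∑ i, f i = m}) ⊕ Fin n) k L)
    (hbr : ∀ (e : {e : Fin n → ℕ // ∑ i, e i = m - 1})
        (f : {f : Fin n → ℕ // ∑ i, f i = m}) (i : Fin n),
        (∀ j, f.val j = e.val j + if j = i then 1 else 0) →
        ⁅b (Sum.inl e), b (Sum.inr (Sum.inl f))⁆ = b (Sum.inr (Sum.inr i)))
    (hbr0 : ∀ (e : {e : Fin n → ℕ // ∑ i, e i = m - 1})
        (f : {f : Fin n → ℕ // ∑ i, f i = m}),
        (¬ ∃ i : Fin n, ∀ j, f.val j = e.val j + if j = i then 1 else 0) →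
        ⁅b (Sum.inl e), b (Sum.inr (Sum.inl f))⁆ = 0)
    (hxx : ∀ e e', ⁅b (Sum.inl e), b (Sum.inl e')⁆ = 0)
    (hyy : ∀ f f', ⁅b (Sum.inr (Sum.inl f)), b (Sum.inr (Sum.inl f'))⁆ = 0)
    (hz : ∀ u (i : Fin n), ⁅b u, b (Sum.inr (Sum.inr i))⁆ = 0)
    (M₁ M₂ : LieIdeal k L) (hcompl : IsCompl M₁ M₂) :
    M₁ = ⊥ ∨ M₂ = ⊥ := by
  classical
  have hn0 : 0 < n := by omega
  by_cases hP2 : ∃ v ∈ M₂, ∃ e : S9E m n, b.repr v (Sum.inl e) ≠ 0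
  · by_cases hP1 : ∃ v ∈ M₁, ∃ e : S9E m n, b.repr v (Sum.inl e) ≠ 0
    · exfalso
      obtain ⟨v₁, hv₁, e₁, he₁⟩ := hP1
      obtain ⟨v₂, hv₂, e₂, he₂⟩ := hP2
      have h1 := s9zmem hm b hbr hbr0 hyy hz M₁ v₁ hv₁ e₁ he₁ ⟨0, hn0⟩
      have h2 := s9zmem hm b hbr hbr0 hyy hz M₂ v₂ hv₂ e₂ he₂ ⟨0, hn0⟩
      have h3 : b (Sum.inr (Sum.inr ⟨0, hn0⟩)) = 0 := by
        have h := disjoint_iff.mp hcompl.disjoint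
        have hx : _ ∈ M₁ ⊓ M₂ := (LieSubmodule.mem_inf M₁ M₂ _).mpr ⟨h1, h2⟩
        rw [h] at hx
        exact (LieSubmodule.mem_bot _).mp hx
      exact b.ne_zero _ h3
    · left
      push_neg at hP1
      exact s9key hm b hn0 hbr hbr0 hxx hyy hz M₂ M₁ hcompl.symm fun v hv e => hP1 v hv e
  · right
    push_neg at hP2
    exact s9key hm b hn0 hbr hbr0 hxx hyy hz M₁ M₂ hcompl fun v hv e => hP2 v hv e
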